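/- Let ν ≥ 0 and λ, δ ≠ 0. If u(t,x) solves u_t + u u_x + λ(t²+1)^{1/2} e^{3ν arctan t} u_{xxx} + δ(t²+1)^{3/2} e^{5ν arctan t} u_{xxxxx} = 0 and has the form u(t,x) = (e^{ν arctan t}/√(t²+1)) φ(ω) + xt/(t²+1) with ω = x e^{−ν arctan t}/√(t²+1), where φ is five times differentiable, then φ satisfies δφ''''' + λφ''' + (φ − νω)φ' + νφ + ω = 0. -/

import Mathlib

/-- Partial derivative in time of a function u(t,x). -/
noncomputable def Dt (u : ℝ → ℝ → ℝ) (t x : ℝ) : ℝ := deriv (fun s => u s x) t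

/-- k-th partial derivative in space of a function u(t,x). -/
noncomputable def Dx (u : ℝ → ℝ → ℝ) (k : ℕ) (t x : ℝ) : ℝ := iteratedDeriv k (u t) x

theorem stmt17 (ν lam δ : ℝ) (hν : 0 ≤ ν) (hl : lam ≠ 0) (hδ : δ ≠ 0)
    (φ : ℝ → ℝ) (hφ : ContDiff ℝ 5 φ)
    (u : ℝ → ℝ → ℝ)
    (hform : ∀ t x : ℝ, u t x = Real.exp (ν * Real.arctan t) / Real.sqrt (t^2+1)
        * φ (x * Real.exp (-(ν * Real.arctan t)) / Real.sqrt (t^2+1)) + x*t/(t^2+1))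
    (hsol : ∀ t x : ℝ, Dt u t x + u t x * Dx u 1 t x
      + lam * (t^2+1) ^ ((1:ℝ)/2) * Real.exp (3*ν*Real.arctan t) * Dx u 3 t x
      + δ * (t^2+1) ^ ((3:ℝ)/2) * Real.exp (5*ν*Real.arctan t) * Dx u 5 t x = 0) :
    ∀ ω : ℝ, δ * iteratedDeriv 5 φ ω + lam * iteratedDeriv 3 φ ω
      + (φ ω - ν*ω) * deriv φ ω + ν * φ ω + ω = 0 := by
  intro ω
  have hφ1 : Differentiable ℝ φ := hφ.differentiable (by norm_num)
  have hu0 : u 0 = φ := by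
    funext x
    rw [hform]
    simp [Real.arctan_zero]
  have hDt : ∀ x : ℝ, Dt u 0 x = ν * φ x - ν * x * deriv φ x + x := by
    intro x
    have hfun : (fun s => u s x) = fun s =>
        Real.exp (ν * Real.arctan s) / Real.sqrt (s^2+1)
          * φ (x * Real.exp (-(ν * Real.arctan s)) / Real.sqrt (s^2+1)) + x*s/(s^2+1) :=
      funext fun s => hform s x
    have harct : HasDerivAt Real.arctan 1 0 := by
      simpa using Real.hasDerivAt_arctan 0
    have hg1 : HasDerivAt (fun s => ν * Real.arctan s) ν 0 := by
      simpa using harct.const_mul ν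
    have hexp : HasDerivAt (fun s => Real.exp (ν * Real.arctan s)) ν 0 := by
      simpa [Real.arctan_zero] using hg1.exp
    have hsq : HasDerivAt (fun s : ℝ => s^2+1) 0 0 := by
      simpa using (hasDerivAt_pow 2 (0:ℝ)).add_const 1
    have hsqrt : HasDerivAt (fun s : ℝ => Real.sqrt (s^2+1)) 0 0 := by
      have := hsq.sqrt (by norm_num)
      simpa using this
    have hA : HasDerivAt (fun s => Real.exp (ν * Real.arctan s) / Real.sqrt (s^2+1)) ν 0 := by
      have := hexp.div hsqrt (by norm_num)
      simp [Real.arctan_zero] at this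
      exact this
    have hexpneg : HasDerivAt (fun s => Real.exp (-(ν * Real.arctan s))) (-ν) 0 := by
      simpa [Real.arctan_zero] using hg1.neg.exp
    have hB : HasDerivAt (fun s => x * Real.exp (-(ν * Real.arctan s)) / Real.sqrt (s^2+1))
        (-(x*ν)) 0 := by
      have := (hexpneg.const_mul x).div hsqrt (by norm_num)
      simp [Real.arctan_zero] at this
      exact this
    have hpt : x * Real.exp (-(ν * Real.arctan 0)) / Real.sqrt ((0:ℝ)^2+1) = x := by
      simp [Real.arctan_zero]
    have hd : HasDerivAt φ (deriv φ x)
        (x * Real.exp (-(ν * Real.arctan 0)) / Real.sqrt ((0:ℝ)^2+1)) := by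
      rw [hpt]; exact (hφ1 x).hasDerivAt
    have hφc : HasDerivAt
        (fun s => φ (x * Real.exp (-(ν * Real.arctan s)) / Real.sqrt (s^2+1)))
        (deriv φ x * (-(x*ν))) 0 := by
      have := hd.comp 0 hB
      simp [Function.comp] at this
      exact this.congr_deriv (by ring)
    have hL : HasDerivAt (fun s : ℝ => x*s/(s^2+1)) x 0 := by
      have := ((hasDerivAt_id (0:ℝ)).const_mul x).div hsq (by norm_num)
      simp at this
      exact this
    have htotal : HasDerivAt (fun s => u s x) (ν * φ x - ν * x * deriv φ x + x) 0 := by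
      rw [hfun]
      have := (hA.mul hφc).add hL
      have heq : ν * φ (x * Real.exp (-(ν * Real.arctan 0)) / Real.sqrt ((0:ℝ)^2+1))
          + Real.exp (ν * Real.arctan 0) / Real.sqrt ((0:ℝ)^2+1) * (deriv φ x * (-(x*ν))) + x
          = ν * φ x - ν * x * deriv φ x + x := by
        rw [hpt]; simp [Real.arctan_zero]; ring
      rw [← heq]
      exact this
    exact htotal.deriv
  have h := hsol 0 ω
  rw [hDt ω] at h
  simp only [Dx, hu0] at h
  have h0 : ((0:ℝ)^2+1) = 1 := by norm_num
  rw [h0] at h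
  simp [Real.arctan_zero, Real.one_rpow, iteratedDeriv_one] at h
  linear_combination h
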